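/- Let p be a prime, q = p^m, and n a positive integer. For every finite subgroup G of GL_n(F_q[t]) (invertible n×n matrices over the polynomial ring F_q[t]), the largest divisor of the order #G that is coprime to p divides the product ∏_{s=1}^{n} (q^s − 1). -/

import Mathlib

private lemma coeff_matrix_mul {Fq : Type} [Field Fq] {n : ℕ}
    {M N : Matrix (Fin n) (Fin n) (Polynomial Fq)} {a b : ℕ}
    (hM : ∀ i j k, k < a → (M i j).coeff k = 0)
    (hN : ∀ i j k, k < b → (N i j).coeff k = 0) :
    ∀ i j k, k < a + b → ((M * N) i j).coeff k = 0 := by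
  intro i j k hk
  rw [Matrix.mul_apply, Polynomial.finset_sum_coeff]
  refine Finset.sum_eq_zero fun l _ => ?_
  rw [Polynomial.coeff_mul]
  refine Finset.sum_eq_zero fun x hx => ?_
  have hx' : x.1 + x.2 = k := Finset.HasAntidiagonal.mem_antidiagonal.1 hx
  rcases lt_or_ge x.1 a with h | h
  · rw [hM i l _ h, zero_mul]
  · rw [hN l j x.2 (by omega), mul_zero]

private lemma coeff_matrix_pow {Fq : Type} [Field Fq] {n : ℕ}
    {M : Matrix (Fin n) (Fin n) (Polynomial Fq)} {a : ℕ}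
    (hM : ∀ i j k, k < a → (M i j).coeff k = 0) {e : ℕ} (he : 2 ≤ e) :
    ∀ i j k, k < a + a → ((M ^ e) i j).coeff k = 0 := by
  obtain ⟨l, rfl⟩ : ∃ l, e = 2 + l := ⟨e - 2, by omega⟩
  intro i j k hk
  rw [pow_add, pow_two, mul_assoc]
  have htriv : ∀ (i j k : _), k < 0 → ((M ^ l) i j).coeff k = 0 :=
    fun _ _ k hk => absurd hk (Nat.not_lt_zero k)
  exact coeff_matrix_mul hM (coeff_matrix_mul hM htriv) i j k (by omega)

private lemma unipotent_coprime_torsion {Fq : Type} [Field Fq] {p : ℕ} (hp : p.Prime)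
    [CharP Fq p] {n : ℕ} {A : Matrix (Fin n) (Fin n) (Polynomial Fq)}
    (h0 : ∀ i j, (A i j).coeff 0 = 0) {u : ℕ} (hu : ¬ p ∣ u)
    (hA : (1 + A) ^ u = 1) : A = 0 := by
  classical
  by_contra hA0
  have hex : ∃ k, ∃ i j, (A i j).coeff k ≠ 0 := by
    by_contra h
    push_neg at h
    exact hA0 (Matrix.ext fun i j => Polynomial.ext fun k => by simpa using h k i j)
  set d := Nat.find hex with hd
  obtain ⟨i, j, hc⟩ : ∃ i j, (A i j).coeff d ≠ 0 := Nat.find_spec hex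
  have hbound : ∀ i' j' k, k < d → (A i' j').coeff k = 0 := by
    intro i' j' k hk
    have := Nat.find_min hex hk
    push_neg at this
    simpa using this i' j'
  have hd1 : 0 < d := Nat.pos_of_ne_zero fun h => hc (by rw [h]; exact h0 i j)
  have hu0 : u ≠ 0 := fun h => hu (h ▸ dvd_zero p)
  have hone : ((1 : Matrix (Fin n) (Fin n) (Polynomial Fq)) i j).coeff d = 0 := by
    by_cases hij' : i = j
    · subst hij'
      simp [Matrix.one_apply, Polynomial.coeff_one, hd1.ne']
    · simp [Matrix.one_apply, hij']
  have hexp := (Commute.one_right A).add_pow u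
  rw [add_comm A 1, hA] at hexp
  have h1 := congrArg (fun B : Matrix (Fin n) (Fin n) (Polynomial Fq) => (B i j).coeff d) hexp
  simp only [Matrix.sum_apply, Polynomial.finset_sum_coeff] at h1
  rw [Finset.sum_eq_single 1 (fun m hm hm1 => ?_) (fun h => absurd (Finset.mem_range.2 (by omega)) h)] at h1
  · -- h1 : coeff of 1 = the m = 1 term
    rw [pow_one, Nat.choose_one_right, ← nsmul_eq_mul' (A * 1 ^ (u - 1)) u, Matrix.smul_apply,
      Polynomial.coeff_smul, one_pow, mul_one, nsmul_eq_mul] at h1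
    rw [hone] at h1
    have hune : (u : Fq) ≠ 0 := fun h => hu ((CharP.cast_eq_zero_iff Fq p u).1 h)
    exact hc (by
      rcases mul_eq_zero.1 h1.symm with h | h
      · exact absurd h hune
      · exact h)
  · -- other terms vanish
    rcases Nat.eq_zero_or_pos m with rfl | hmpos
    · simpa using hone
    · have hm2 : 2 ≤ m := by omega
      rw [← nsmul_eq_mul' (A ^ m * 1 ^ (u - m)) (u.choose m), Matrix.smul_apply,
        Polynomial.coeff_smul, one_pow, mul_one]
      rw [coeff_matrix_pow hbound hm2 i j d (by omega), smul_zero]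

private lemma GL_card_factor (p m n : ℕ) (hp : p.Prime) (q : ℕ) (hq : q = p ^ m) :
    ∏ i : Fin n, (q ^ n - q ^ (i : ℕ)) =
      p ^ (m * ∑ i ∈ Finset.range n, i) * ∏ s ∈ Finset.Icc 1 n, (q ^ s - 1) := by
  rw [Fin.prod_univ_eq_prod_range (fun i => q ^ n - q ^ i) n]
  have hfac : ∀ i ∈ Finset.range n, q ^ n - q ^ i = q ^ i * (q ^ (n - i) - 1) := by
    intro i hi
    have hi' : i ≤ n := le_of_lt (Finset.mem_range.1 hi)
    rw [Nat.mul_sub, mul_one, ← pow_add, Nat.add_sub_cancel' hi']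
  rw [Finset.prod_congr rfl hfac, Finset.prod_mul_distrib, Finset.prod_pow_eq_pow_sum]
  congr 1
  · rw [hq, ← pow_mul]
  rw [← Finset.Ico_add_one_right_eq_Icc, Finset.prod_Ico_eq_prod_range]
  simp only [Nat.succ_sub_one, Nat.add_sub_cancel]
  rw [← Finset.prod_range_reflect (fun i => q ^ (1 + i) - 1) n]
  refine Finset.prod_congr rfl fun j hj => ?_
  have hjn := Finset.mem_range.1 hj
  congr 2
  omega

/-- Let `p` be a prime, `q = p^m`, and `n` a positive integer. For every
finite subgroup `G` of `GL n (F_q[t])`, the largest divisor of `#G` coprime to `p`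
(i.e. the prime-to-`p` part `ordCompl[p] #G`) divides `∏_{s=1}^{n} (q^s − 1)`. -/
theorem finite_subgroup_GL_polynomial_ordCompl_dvd
    (p m : ℕ) (hp : p.Prime) (hm : 0 < m)
    (Fq : Type) [Field Fq] [Fintype Fq] (hq : Fintype.card Fq = p ^ m)
    (n : ℕ) (hn : 0 < n)
    (G : Subgroup (GL (Fin n) (Polynomial Fq))) (hG : Finite G) :
    ordCompl[p] (Nat.card G) ∣ ∏ s ∈ Finset.Icc 1 n, (Fintype.card Fq ^ s - 1) := by
  classical
  have hfact : Fact p.Prime := ⟨hp⟩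
  -- the characteristic of Fq is p
  have hcharFq : CharP Fq p := by
    obtain ⟨r, hr⟩ := CharP.exists Fq
    obtain ⟨k, hkprime, hcard⟩ := FiniteField.card Fq r
    have hpr : p = r := by
      have hdvd : p ∣ r ^ (k : ℕ) := by
        rw [← hcard, hq]; exact dvd_pow_self p (by omega)
      exact (Nat.prime_dvd_prime_iff_eq hp hkprime).1 (hp.dvd_of_dvd_pow hdvd)
    rwa [hpr]
  set f : Polynomial Fq →+* Fq := Polynomial.evalRingHom 0 with hf
  set φ : GL (Fin n) (Polynomial Fq) →* GL (Fin n) Fq := Matrix.GeneralLinearGroup.map f with hφ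
  set ψ : G →* GL (Fin n) Fq := φ.comp G.subtype with hψ
  -- elements of the kernel of prime-to-p order are trivial
  have hker : ∀ x : ψ.ker, ∀ u : ℕ, ¬ p ∣ u → x ^ u = 1 → x = 1 := by
    intro x u hu hxu
    set U : GL (Fin n) (Polynomial Fq) := ((x : G) : GL (Fin n) (Polynomial Fq)) with hU
    have hmem : ψ (x : G) = 1 := x.2
    have hmat : (RingHom.mapMatrix f) (U : Matrix (Fin n) (Fin n) (Polynomial Fq)) = 1 := by
      have h := congrArg Units.val hmem
      simpa [hψ, hφ, Matrix.GeneralLinearGroup.map, Units.coe_map] using h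
    set M : Matrix (Fin n) (Fin n) (Polynomial Fq) := (U : Matrix (Fin n) (Fin n) (Polynomial Fq))
      with hM
    have h0 : ∀ i j, ((M - 1) i j).coeff 0 = 0 := by
      intro i j
      have hentry : f (M i j) = (1 : Matrix (Fin n) (Fin n) Fq) i j := by
        have := congrFun (congrFun (congrArg (fun N : Matrix (Fin n) (Fin n) Fq => N) hmat) i) j
        simpa [RingHom.mapMatrix_apply, Matrix.map_apply] using this
      rw [Matrix.sub_apply, Polynomial.coeff_sub]
      rw [Polynomial.coeff_zero_eq_eval_zero, Polynomial.coeff_zero_eq_eval_zero]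
      have hfval : (M i j).eval 0 = (1 : Matrix (Fin n) (Fin n) Fq) i j := hentry
      by_cases hij : i = j
      · subst hij; simp [Matrix.one_apply] at hfval ⊢; simp [hfval]
      · simp [Matrix.one_apply, hij] at hfval ⊢; simp [hfval]
    have hupow : M ^ u = 1 := by
      have hx : ((x : G) : GL (Fin n) (Polynomial Fq)) ^ u = 1 := by
        have : ((x ^ u : ψ.ker) : G) = ((1 : ψ.ker) : G) := congrArg _ hxu
        have hG' : ((x : G) : GL (Fin n) (Polynomial Fq)) ^ u
            = ((1 : G) : GL (Fin n) (Polynomial Fq)) := by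
          have h2 : (x : G) ^ u = (1 : G) := by simpa using this
          have := congrArg (fun y : G => (y : GL (Fin n) (Polynomial Fq))) h2
          simpa using this
        simpa using hG'
      have := congrArg Units.val hx
      simpa [Units.val_pow_eq_pow_val] using this
    have hpow : (1 + (M - 1)) ^ u = 1 := by
      have : 1 + (M - 1) = M := by abel
      rw [this]; exact hupow
    have hA := unipotent_coprime_torsion hp h0 hu hpow
    have hMone : M = 1 := by
      have := sub_eq_zero.1 hA
      simpa using this
    have hUone : U = 1 := Units.ext (by simpa [hM] using hMone)
    have hx1 : (x : G) = 1 := by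
      apply OneMemClass.coe_eq_one.1
      simpa [hU] using hUone
    exact OneMemClass.coe_eq_one.1 hx1
  -- the kernel is a p-group
  have hpK : IsPGroup p ψ.ker := by
    intro g
    have hord : 0 < orderOf g := orderOf_pos g
    refine ⟨(orderOf g).factorization p, ?_⟩
    have h1 : (g ^ p ^ (orderOf g).factorization p) ^ ordCompl[p] (orderOf g) = 1 := by
      rw [← pow_mul, Nat.ordProj_mul_ordCompl_eq_self, pow_orderOf_eq_one]
    exact hker _ _ (Nat.not_dvd_ordCompl hp hord.ne') h1
  obtain ⟨k, hk⟩ := (IsPGroup.iff_card (p := p)).1 hpK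
  have hcards : Nat.card G = Nat.card (G ⧸ ψ.ker) * Nat.card ψ.ker :=
    Subgroup.card_eq_card_quotient_mul_card_subgroup ψ.ker
  have hquot : Nat.card (G ⧸ ψ.ker) = Nat.card ψ.range :=
    Nat.card_congr (QuotientGroup.quotientKerEquivRange ψ).toEquiv
  have hdvd : Nat.card ψ.range ∣ Nat.card (GL (Fin n) Fq) :=
    Subgroup.card_subgroup_dvd_card _
  have hcompl_pow : ∀ e : ℕ, ordCompl[p] (p ^ e) = 1 := by
    intro e
    rw [hp.factorization_pow, Finsupp.single_eq_same, Nat.div_self (pow_pos hp.pos e)]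
  have h2 : ordCompl[p] (Nat.card G) = ordCompl[p] (Nat.card ψ.range) := by
    rw [hcards, Nat.ordCompl_mul, hk, hcompl_pow, mul_one, hquot]
  have hGL : Nat.card (GL (Fin n) Fq)
      = p ^ (m * ∑ i ∈ Finset.range n, i) * ∏ s ∈ Finset.Icc 1 n, (Fintype.card Fq ^ s - 1) := by
    rw [Matrix.card_GL_field]
    exact GL_card_factor p m n hp _ hq
  have h3 : ordCompl[p] (Nat.card (GL (Fin n) Fq))
      ∣ ∏ s ∈ Finset.Icc 1 n, (Fintype.card Fq ^ s - 1) := by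
    rw [hGL, Nat.ordCompl_mul, hcompl_pow, one_mul]
    exact Nat.ordCompl_dvd _ p
  calc ordCompl[p] (Nat.card G) = ordCompl[p] (Nat.card ψ.range) := h2
    _ ∣ ordCompl[p] (Nat.card (GL (Fin n) Fq)) := Nat.ordCompl_dvd_ordCompl_of_dvd hdvd p
    _ ∣ _ := h3
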